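/- Let (X,r) be a non-degenerate 2-cancellative quadratic set of finite order n ≥ 3, and let q be the number of orbits of the cyclic group ⟨r⟩ acting on X² which have more than one element. Then n−1 ≤ q ≤ n(n−1)/2. -/

import Mathlib

def Nondegenerate {X : Type*} (r : Equiv.Perm (X × X)) : Prop :=
  (∀ x : X, Function.Bijective fun y : X => (r (x, y)).1) ∧
  (∀ y : X, Function.Bijective fun x : X => (r (x, y)).2)

def TwoCancellative {X : Type*} (r : Equiv.Perm (X × X)) : Prop :=
  ∀ k : ℕ, 1 ≤ k → r ^ k ≠ 1 →
    (∀ x y z : X, (r ^ k) (x, y) = (x, z) → z = y) ∧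
    (∀ x y t : X, (r ^ k) (x, y) = (t, y) → x = t)

/-- The orbit of a pair `p` under the cyclic group generated by `r`. -/
def rOrbit {X : Type*} (r : Equiv.Perm (X × X)) (p : X × X) : Set (X × X) :=
  Set.range fun k : ℤ => (r ^ k) p

section Aux
variable {X : Type*} (r : Equiv.Perm (X × X))

lemma mem_rOrbit_self (p : X × X) : p ∈ rOrbit r p := ⟨0, by simp⟩

lemma zpow_mem_rOrbit (p : X × X) (k : ℤ) : (r ^ k) p ∈ rOrbit r p := ⟨k, rfl⟩

lemma rOrbit_eq_of_mem {p q : X × X} (h : q ∈ rOrbit r p) : rOrbit r q = rOrbit r p := by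
  obtain ⟨a, ha⟩ := h
  simp only at ha
  ext z
  constructor
  · rintro ⟨k, hk⟩
    simp only at hk
    exact ⟨k + a, by show (r ^ (k + a)) p = z; rw [← hk, ← ha, ← Equiv.Perm.mul_apply, ← zpow_add]⟩
  · rintro ⟨k, hk⟩
    simp only at hk
    refine ⟨k - a, ?_⟩
    show (r ^ (k - a)) q = z
    rw [← ha, ← Equiv.Perm.mul_apply, ← zpow_add, sub_add_cancel, hk]

lemma rOrbit_eq_singleton {p : X × X} (h : r p = p) : rOrbit r p = {p} := by
  ext z
  simp only [Set.mem_singleton_iff, rOrbit, Set.mem_range]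
  constructor
  · rintro ⟨k, hk⟩
    rw [← hk]
    exact (Function.IsFixedPt.perm_zpow h k)
  · rintro rfl; exact ⟨0, by simp⟩

variable [Fintype X]

lemma r_ne_one (hn3 : 3 ≤ Fintype.card X) (hnd : Nondegenerate r) : r ≠ 1 := by
  intro h
  obtain ⟨x, y, hxy⟩ := Fintype.exists_pair_of_one_lt_card (by omega : 1 < Fintype.card X)
  have := (hnd.1 x).1 (a₁ := x) (a₂ := y)
  simp [h] at this
  exact hxy this

/-- within an orbit, first coordinates are distinct -/
lemma fst_injOn (hc : TwoCancellative r) (p : X × X) :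
    Set.InjOn Prod.fst (rOrbit r p) := by
  rintro a ⟨i, hi⟩ b ⟨j, hj⟩ hfst
  by_contra hab
  have hord : 0 < orderOf r := orderOf_pos r
  set m : ℕ := ((j - i) % (orderOf r : ℤ)).toNat with hm
  have hmod : (0:ℤ) ≤ (j - i) % (orderOf r : ℤ) := Int.emod_nonneg _ (by exact_mod_cast hord.ne')
  have hpow : (r ^ (m : ℤ)) = r ^ (j - i) := by
    rw [Int.toNat_of_nonneg hmod]
    exact zpow_mod_orderOf r (j - i)
  have hb : (r ^ m) a = b := by
    have : (r ^ (j - i)) a = b := by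
      rw [← hi, ← hj, ← Equiv.Perm.mul_apply, ← zpow_add, sub_add_cancel]
    rw [← this, ← hpow, zpow_natCast]
  have hm1 : 1 ≤ m := by
    rcases Nat.eq_zero_or_pos m with h0 | h1
    · exfalso; apply hab; rw [← hb, h0, pow_zero]; rfl
    · exact h1
  have hne : r ^ m ≠ 1 := by
    intro h1
    apply hab
    rw [← hb, h1]; rfl
  obtain ⟨a1, a2⟩ := a
  obtain ⟨b1, b2⟩ := b
  simp only at hfst
  subst hfst
  have : b2 = a2 := (hc m hm1 hne).1 a1 a2 b2 hb
  exact hab (by rw [this])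

end Aux

theorem stmt_4 {X : Type*} [Fintype X] (n : ℕ) (hn : Fintype.card X = n)
    (hn3 : 3 ≤ n) (r : Equiv.Perm (X × X))
    (hnd : Nondegenerate r) (hc : TwoCancellative r)
    (q : ℕ)
    (hq : q = Set.ncard {O : Set (X × X) | (∃ p, O = rOrbit r p) ∧ 1 < O.ncard}) :
    n - 1 ≤ q ∧ q ≤ n * (n - 1) / 2 := by
  classical
  have hr1 : r ≠ 1 := r_ne_one r (hn ▸ hn3) hnd
  -- fixed points
  set F : Finset (X × X) := Finset.univ.filter (fun p => r p = p) with hF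
  -- F.card = n
  have hFcard : F.card = n := by
    rw [← hn]
    apply Finset.card_nbij' (i := fun p => p.1) (j := fun x => (x, (Equiv.ofBijective _ (hnd.1 x)).symm x))
    · intro p _; exact Finset.mem_univ _
    · intro x _
      simp only [hF, Finset.mem_coe, Finset.mem_filter, Finset.mem_univ, true_and]
      -- r (x, y) = (x, y) where y chosen s.t. first coord is x
      set y := (Equiv.ofBijective _ (hnd.1 x)).symm x with hy
      have h1 : (r (x, y)).1 = x := by
        have := (Equiv.ofBijective _ (hnd.1 x)).apply_symm_apply x
        exact this
      have h2 : r (x, y) = (x, (r (x, y)).2) := Prod.ext h1 rfl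
      have := (hc 1 le_rfl (by simpa using hr1)).1 x y ((r (x,y)).2) (by simpa using h2)
      rw [Prod.ext_iff]
      constructor
      · exact h1
      · exact this
    · intro p hp
      simp only [hF, Finset.mem_coe, Finset.mem_filter, Finset.mem_univ, true_and] at hp
      -- need (p.1, symm p.1) = p i.e. symm applied gives p.2
      obtain ⟨x, y⟩ := p
      simp only
      congr 1
      have h1 : (r (x, y)).1 = x := by rw [hp]
      exact ((Equiv.ofBijective _ (hnd.1 x)).symm_apply_eq).2 h1.symm
    · intro x _; rfl
  have hcardXX : Fintype.card (X × X) = n * n := by simp [hn]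
  set S := {O : Set (X × X) | (∃ p, O = rOrbit r p) ∧ 1 < O.ncard} with hS
  have hSfin : S.Finite := Set.toFinite _
  set T := hSfin.toFinset with hT
  have hqT : q = T.card := by rw [hq, hT, Set.ncard_eq_toFinset_card S hSfin]
  set N : Finset (X × X) := Finset.univ.filter (fun p => r p ≠ p) with hN
  have hNcard : N.card = n * n - n := by
    have hNF : N = Fᶜ := by
      ext p; simp [hN, hF]
    rw [hNF, Finset.card_compl, hFcard, hcardXX]
  have hmap : ∀ p ∈ N, rOrbit r p ∈ T := by
    intro p hp
    simp only [hN, Finset.mem_filter, Finset.mem_univ, true_and] at hp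
    rw [hT, Set.Finite.mem_toFinset]
    refine ⟨⟨p, rfl⟩, ?_⟩
    rw [Set.one_lt_ncard_iff (Set.toFinite _)]
    refine ⟨p, r p, mem_rOrbit_self r p, ?_, fun h => hp h.symm⟩
    have : r p = (r ^ (1:ℤ)) p := by simp
    rw [this]; exact zpow_mem_rOrbit r p 1
  have hsum := Finset.card_eq_sum_card_fiberwise hmap
  have hfiber : ∀ O ∈ T, (N.filter (fun p => rOrbit r p = O)).card = O.ncard := by
    intro O hO
    rw [hT, Set.Finite.mem_toFinset] at hO
    obtain ⟨⟨p₀, rfl⟩, hO2⟩ := hO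
    have hset : ↑(N.filter (fun p => rOrbit r p = rOrbit r p₀)) = rOrbit r p₀ := by
      ext p
      simp only [Finset.coe_filter, Set.mem_setOf_eq, hN, Finset.mem_filter,
        Finset.mem_univ, true_and]
      constructor
      · rintro ⟨_, hpe⟩
        rw [← hpe]; exact mem_rOrbit_self r p
      · intro hp
        refine ⟨?_, rOrbit_eq_of_mem r hp⟩
        intro hfix
        rw [← rOrbit_eq_of_mem r hp, rOrbit_eq_singleton r hfix] at hO2
        simp at hO2
    rw [← Set.ncard_coe_finset, hset]
  have hlb : ∀ O ∈ T, 2 ≤ O.ncard := by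
    intro O hO
    rw [hT, Set.Finite.mem_toFinset] at hO
    obtain ⟨_, h2⟩ := hO
    omega
  have hub : ∀ O ∈ T, O.ncard ≤ n := by
    intro O hO
    rw [hT, Set.Finite.mem_toFinset] at hO
    obtain ⟨⟨p₀, rfl⟩, _⟩ := hO
    calc (rOrbit r p₀).ncard = (Prod.fst '' rOrbit r p₀).ncard :=
          (Set.ncard_image_of_injOn (fst_injOn r hc p₀)).symm
      _ ≤ (Set.univ : Set X).ncard := Set.ncard_le_ncard (Set.subset_univ _) (Set.toFinite _)
      _ = n := by rw [Set.ncard_univ, Nat.card_eq_fintype_card, hn]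
  have hsum2 : ∑ O ∈ T, O.ncard = n * n - n := by
    rw [← hNcard, hsum]
    exact Finset.sum_congr rfl (fun O hO => (hfiber O hO).symm)
  have hlow : n * n - n ≤ T.card * n := by
    rw [← hsum2]
    calc ∑ O ∈ T, O.ncard ≤ ∑ _O ∈ T, n := Finset.sum_le_sum hub
      _ = T.card * n := by rw [Finset.sum_const, smul_eq_mul]
  have hhigh : T.card * 2 ≤ n * n - n := by
    rw [← hsum2]
    calc T.card * 2 = ∑ _O ∈ T, 2 := by rw [Finset.sum_const, smul_eq_mul]
      _ ≤ ∑ O ∈ T, O.ncard := Finset.sum_le_sum hlb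
  have hnn : n * n - n = n * (n - 1) := by
    cases n with
    | zero => rfl
    | succ m =>
      have : (m + 1) * (m + 1) = (m + 1) * m + (m + 1) := by ring
      simp only [Nat.add_sub_cancel]
      omega
  constructor
  · rw [hqT]
    have h1 : n * (n - 1) ≤ T.card * n := hnn ▸ hlow
    have h2 : (n - 1) * n ≤ T.card * n := by rw [Nat.mul_comm (n - 1) n]; exact h1
    exact Nat.le_of_mul_le_mul_right h2 (by omega)
  · rw [hqT, Nat.le_div_iff_mul_le (by norm_num : 0 < 2)]
    calc T.card * 2 ≤ n * n - n := hhigh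
      _ = n * (n - 1) := hnn
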